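/- Let n ≥ 3 and let P be an odd, harmonic, homogeneous polynomial of degree l ≥ 3 on ℝ^n, and for r,s ∈ {1,…,n} set P_{rs} := (l(l−1))^{−1} ∂_r∂_s P. Then for every r,s ∈ {1,…,n} and every x ∈ ℝ^n \ {0}: −((n+l−3)(n+l−5))^{−1} Δ[ ∂_r( P_{rs}(x) |x|^{−(n+l−5)} ) ] = (l−1)(n+l−3)^{−1} ∂_r( P_{rs}(x) |x|^{−(n+l−3)} ), where Δ is the Laplacian in the variable x. -/

import Mathlib

open MeasureTheory Metric Set Filter
open scoped ENNReal NNReal Topology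

noncomputable section

abbrev En (n : ℕ) : Type := EuclideanSpace ℝ (Fin n)

/-- P is odd: P(−x) = −P(x) for all x. -/
def IsOddPoly (n : ℕ) (P : MvPolynomial (Fin n) ℝ) : Prop :=
  ∀ x : Fin n → ℝ, MvPolynomial.eval (-x) P = -MvPolynomial.eval x P

/-- P is harmonic: ΔP = 0. -/
def IsHarmonicPoly (n : ℕ) (P : MvPolynomial (Fin n) ℝ) : Prop :=
  ∑ j : Fin n, MvPolynomial.pderiv j (MvPolynomial.pderiv j P) = 0

/-- The partial derivative ∂_r of a function on ℝⁿ. -/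
def partialDer (n : ℕ) (r : Fin n) (f : En n → ℝ) : En n → ℝ :=
  fun x => fderiv ℝ f x (EuclideanSpace.single r 1)

/-- The Laplacian Δ = Σ_j ∂_j² of a function on ℝⁿ. -/
def laplacianFun (n : ℕ) (f : En n → ℝ) : En n → ℝ :=
  fun x => ∑ j : Fin n, partialDer n j (partialDer n j f) x

namespace SemmesAux

open MvPolynomial Finsupp

variable {n : ℕ}

/-! ### Algebraic lemmas -/

lemma degree_eq_sum (s : Fin n →₀ ℕ) : s.degree = ∑ i : Fin n, s i := by
  rw [Finsupp.degree]
  exact Finset.sum_subset (Finset.subset_univ _)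
    (fun i _ hi => by simpa [Finsupp.notMem_support_iff] using hi)

lemma X_mul_pderiv_monomial (s : Fin n →₀ ℕ) (a : ℝ) (i : Fin n) :
    X i * pderiv i (monomial s a) = (s i : ℝ) • monomial s a := by
  rw [pderiv_monomial, smul_monomial, smul_eq_mul]
  by_cases h0 : s i = 0
  · simp [h0]
  · have hle : Finsupp.single i 1 ≤ s := by
      rw [Finsupp.single_le_iff]; omega
    rw [X, monomial_mul, one_mul, add_tsub_cancel_of_le hle, mul_comm]

lemma euler {P : MvPolynomial (Fin n) ℝ} {m : ℕ} (hP : P.IsHomogeneous m) :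
    ∑ i : Fin n, X i * pderiv i P = (m : ℝ) • P := by
  conv_lhs => rw [P.as_sum]
  conv_rhs => rw [P.as_sum]
  simp only [map_sum, Finset.mul_sum]
  rw [Finset.sum_comm, Finset.smul_sum]
  refine Finset.sum_congr rfl fun s hs => ?_
  rw [Finset.sum_congr rfl fun i _ => X_mul_pderiv_monomial s (coeff s P) i]
  rw [← Finset.sum_smul]
  congr 1
  have := hP (MvPolynomial.mem_support_iff.1 hs)
  change (Finsupp.weight (fun _ : Fin n => (1 : ℕ))) s = m at this
  rw [← degree_eq_weight_one] at this
  rw [← Nat.cast_sum, ← degree_eq_sum, this]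

lemma pderiv_isHomogeneous {P : MvPolynomial (Fin n) ℝ} {m : ℕ}
    (hP : P.IsHomogeneous m) (i : Fin n) :
    (pderiv i P).IsHomogeneous (m - 1) := by
  conv => enter [1]; rw [P.as_sum]
  rw [map_sum]
  apply IsHomogeneous.sum
  intro s hs
  rw [pderiv_monomial]
  by_cases h0 : s i = 0
  · rw [h0]; simp only [Nat.cast_zero, mul_zero, monomial_zero]
    exact isHomogeneous_zero _ _ _
  · apply isHomogeneous_monomial
    have hdeg : s.degree = m := by
      have := hP (MvPolynomial.mem_support_iff.1 hs)
      change (Finsupp.weight (fun _ : Fin n => (1 : ℕ))) s = m at this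
      rw [← degree_eq_weight_one] at this; exact this
    have hle : Finsupp.single i 1 ≤ s := by rw [Finsupp.single_le_iff]; omega
    have hadd : Finsupp.single i 1 + (s - Finsupp.single i 1) = s :=
      add_tsub_cancel_of_le hle
    have h1 : (Finsupp.single i 1 + (s - Finsupp.single i 1)).degree
        = (Finsupp.single i 1).degree + (s - Finsupp.single i 1).degree := by
      simp [degree_eq_sum, Finsupp.add_apply, Finset.sum_add_distrib]
    have h2 : (Finsupp.single i 1).degree = 1 := by
      simp [degree_eq_sum, Finsupp.single_apply]
    rw [hadd, hdeg] at h1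
    omega

lemma sum_pderiv_pderiv_X_mul {Q : MvPolynomial (Fin n) ℝ}
    (hQ : ∑ j : Fin n, pderiv j (pderiv j Q) = 0) (r : Fin n) :
    ∑ j : Fin n, pderiv j (pderiv j (X r * Q)) = (2 : ℝ) • pderiv r Q := by
  classical
  have key : ∀ j : Fin n, pderiv j (pderiv j (X r * Q)) =
      (if j = r then pderiv r Q + pderiv r Q else 0) + X r * pderiv j (pderiv j Q) := by
    intro j
    by_cases h : j = r
    · subst h
      rw [if_pos rfl, pderiv_mul, pderiv_X_self, one_mul, map_add, pderiv_mul,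
        pderiv_X_self, one_mul]
      ring
    · rw [if_neg h, pderiv_mul, pderiv_X_of_ne (Ne.symm h), zero_mul, zero_add,
        pderiv_mul, pderiv_X_of_ne (Ne.symm h), zero_mul, zero_add]
  rw [Finset.sum_congr rfl fun j _ => key j, Finset.sum_add_distrib,
    ← Finset.mul_sum, hQ, mul_zero, add_zero, Finset.sum_ite_eq' Finset.univ r,
    if_pos (Finset.mem_univ r), two_smul]

lemma pderiv_comm (i j : Fin n) (P : MvPolynomial (Fin n) ℝ) :
    pderiv i (pderiv j P) = pderiv j (pderiv i P) := by
  rcases eq_or_ne i j with rfl | hij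
  · rfl
  · induction P using MvPolynomial.induction_on' with
    | monomial s a =>
        rw [pderiv_monomial, pderiv_monomial, pderiv_monomial, pderiv_monomial]
        have hji : (s - Finsupp.single j 1 : Fin n →₀ ℕ) i = s i := by
          rw [Finsupp.tsub_apply, Finsupp.single_apply, if_neg (by exact fun h => hij h.symm)]
          rfl
        have hij' : (s - Finsupp.single i 1 : Fin n →₀ ℕ) j = s j := by
          rw [Finsupp.tsub_apply, Finsupp.single_apply, if_neg (by exact fun h => hij h)]
          rfl
        rw [hji, hij', tsub_right_comm]
        congr 1
        ring
    | add p q hp hq =>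
        rw [map_add, map_add, map_add, map_add, hp, hq]

lemma lap_pderiv {P : MvPolynomial (Fin n) ℝ}
    (hh : ∑ j : Fin n, pderiv j (pderiv j P) = 0) (r : Fin n) :
    ∑ j : Fin n, pderiv j (pderiv j (pderiv r P)) = 0 := by
  have key : ∀ j : Fin n, pderiv j (pderiv j (pderiv r P))
      = pderiv r (pderiv j (pderiv j P)) := by
    intro j
    rw [pderiv_comm j r P, pderiv_comm j r (pderiv j P)]
  rw [Finset.sum_congr rfl fun j _ => key j, ← map_sum, hh, map_zero]

/-! ### Derivative of polynomial evaluation -/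

noncomputable def evalL (Q : MvPolynomial (Fin n) ℝ) (v : Fin n → ℝ) : (Fin n → ℝ) →L[ℝ] ℝ :=
  ∑ i : Fin n, MvPolynomial.eval v (pderiv i Q) • (ContinuousLinearMap.proj i : (Fin n → ℝ) →L[ℝ] ℝ)

lemma hasFDerivAt_eval (Q : MvPolynomial (Fin n) ℝ) (v : Fin n → ℝ) :
    HasFDerivAt (fun w : Fin n → ℝ => MvPolynomial.eval w Q) (evalL Q v) v := by
  classical
  induction Q using MvPolynomial.induction_on with
  | C a =>
      have h0 : evalL (n := n) (C a) v = 0 := by simp [evalL, pderiv_C]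
      simp only [eval_C, h0]
      exact hasFDerivAt_const a v
  | add p q hp hq =>
      have : HasFDerivAt (fun w : Fin n → ℝ => MvPolynomial.eval w p + MvPolynomial.eval w q)
          (evalL p v + evalL q v) v := hp.add hq
      convert this using 1
      · funext w; simp
      · simp [evalL, add_smul, Finset.sum_add_distrib]
  | mul_X p i hp =>
      have hX : HasFDerivAt (fun w : Fin n → ℝ => w i)
          (ContinuousLinearMap.proj i : (Fin n → ℝ) →L[ℝ] ℝ) v :=
        (ContinuousLinearMap.proj i : (Fin n → ℝ) →L[ℝ] ℝ).hasFDerivAt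
      have : HasFDerivAt (fun w : Fin n → ℝ => MvPolynomial.eval w p * w i)
          (MvPolynomial.eval v p • (ContinuousLinearMap.proj i : (Fin n → ℝ) →L[ℝ] ℝ)
            + v i • evalL p v) v := hp.mul hX
      have hfun : (fun w : Fin n → ℝ => MvPolynomial.eval w (p * X i))
          = fun w => MvPolynomial.eval w p * w i := by funext w; simp
      rw [hfun]
      refine this.congr_fderiv (Eq.symm ?_)
      · rw [evalL]
        have : ∀ j : Fin n,
            MvPolynomial.eval v (pderiv j (p * X i)) •
              (ContinuousLinearMap.proj j : (Fin n → ℝ) →L[ℝ] ℝ)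
            = (MvPolynomial.eval v (pderiv j p) * v i) • ContinuousLinearMap.proj j
              + (if j = i then MvPolynomial.eval v p • (ContinuousLinearMap.proj j :
                  (Fin n → ℝ) →L[ℝ] ℝ) else 0) := by
          intro j
          by_cases h : j = i
          · subst h
            rw [if_pos rfl, pderiv_mul, pderiv_X_self, mul_one, map_add, eval_mul, eval_X,
              add_smul]
          · simp only [pderiv_mul, pderiv_X_of_ne (Ne.symm h), mul_zero, add_zero, eval_mul,
              eval_X, if_neg h, add_zero]
        rw [Finset.sum_congr rfl fun j _ => this j, Finset.sum_add_distrib,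
          Finset.sum_ite_eq' Finset.univ i, if_pos (Finset.mem_univ i)]
        rw [add_comm]
        congr 1
        rw [evalL, Finset.smul_sum]
        refine Finset.sum_congr rfl fun j _ => ?_
        module

/-! ### Functions on `En n` -/

def pe (Q : MvPolynomial (Fin n) ℝ) : En n → ℝ :=
  fun y => MvPolynomial.eval (fun i => y i) Q

noncomputable def peD (Q : MvPolynomial (Fin n) ℝ) (x : En n) : En n →L[ℝ] ℝ :=
  (evalL Q (fun i => x i)).comp
    ((EuclideanSpace.equiv (Fin n) ℝ).toContinuousLinearMap)

lemma hasFDerivAt_pe (Q : MvPolynomial (Fin n) ℝ) (x : En n) :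
    HasFDerivAt (pe Q) (peD Q x) x := by
  have h := (hasFDerivAt_eval Q (fun i => x i)).comp x
    ((EuclideanSpace.equiv (Fin n) ℝ).toContinuousLinearMap.hasFDerivAt)
  exact h

lemma peD_single (Q : MvPolynomial (Fin n) ℝ) (x : En n) (r : Fin n) :
    peD Q x (EuclideanSpace.single r 1) = pe (pderiv r Q) x := by
  classical
  rw [peD, ContinuousLinearMap.comp_apply]
  have h1 : ((EuclideanSpace.equiv (Fin n) ℝ).toContinuousLinearMap)
      (EuclideanSpace.single r 1) = fun i => (EuclideanSpace.single r (1:ℝ)) i := rfl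
  rw [h1, evalL]
  rw [ContinuousLinearMap.sum_apply]
  have h2 : ∀ i : Fin n,
      (MvPolynomial.eval (fun j => x j) (pderiv i Q) •
        (ContinuousLinearMap.proj i : (Fin n → ℝ) →L[ℝ] ℝ))
        (fun j => (EuclideanSpace.single r (1:ℝ)) j)
      = if i = r then MvPolynomial.eval (fun j => x j) (pderiv i Q) else 0 := by
    intro i
    rw [ContinuousLinearMap.smul_apply, ContinuousLinearMap.proj_apply]
    by_cases h : i = r
    · subst h; rw [if_pos rfl, EuclideanSpace.single_apply, if_pos rfl, smul_eq_mul, mul_one]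
    · rw [if_neg h, EuclideanSpace.single_apply, if_neg h, smul_eq_mul, mul_zero]
  rw [Finset.sum_congr rfl fun i _ => h2 i, Finset.sum_ite_eq' Finset.univ r,
    if_pos (Finset.mem_univ r)]
  rfl

def SP (n : ℕ) : MvPolynomial (Fin n) ℝ := ∑ i : Fin n, X i * X i

lemma pe_SP (y : En n) : pe (SP n) y = ‖y‖ ^ 2 := by
  rw [pe, SP, map_sum, EuclideanSpace.norm_eq, Real.sq_sqrt (by positivity)]
  refine Finset.sum_congr rfl fun i _ => ?_
  rw [eval_mul, eval_X, Real.norm_eq_abs, sq_abs, sq]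

lemma pderiv_SP (r : Fin n) : pderiv r (SP n) = 2 • X r := by
  classical
  rw [SP, map_sum]
  have : ∀ i : Fin n, pderiv r (X i * X i) = if i = r then 2 • X (R := ℝ) r else 0 := by
    intro i
    by_cases h : i = r
    · subst h; rw [if_pos rfl, pderiv_mul, pderiv_X_self, one_mul, mul_one, two_smul]
    · rw [if_neg h, pderiv_mul, pderiv_X_of_ne h, zero_mul, mul_zero, add_zero]
  rw [Finset.sum_congr rfl fun i _ => this i, Finset.sum_ite_eq' Finset.univ r,
    if_pos (Finset.mem_univ r)]

noncomputable def hF (t : ℝ) (Q : MvPolynomial (Fin n) ℝ) : En n → ℝ :=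
  fun y => pe Q y * (‖y‖ ^ 2 : ℝ) ^ t

noncomputable def hD (t : ℝ) (Q : MvPolynomial (Fin n) ℝ) (x : En n) : En n →L[ℝ] ℝ :=
  ((‖x‖ ^ 2 : ℝ) ^ t) • peD Q x
    + (pe Q x * (t * (‖x‖ ^ 2 : ℝ) ^ (t - 1))) • peD (SP n) x

lemma hasFDerivAt_hF (t : ℝ) (Q : MvPolynomial (Fin n) ℝ) {x : En n} (hx : x ≠ 0) :
    HasFDerivAt (hF t Q) (hD t Q x) x := by
  have hs : (0 : ℝ) < ‖x‖ ^ 2 := by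
    have : ‖x‖ ≠ 0 := norm_ne_zero_iff.2 hx
    positivity
  have h1 : HasFDerivAt (fun y : En n => (‖y‖ ^ 2 : ℝ)) (peD (SP n) x) x := by
    have := hasFDerivAt_pe (SP n) x
    have he : (pe (SP n) : En n → ℝ) = fun y : En n => (‖y‖ ^ 2 : ℝ) := funext pe_SP
    rwa [he] at this
  have h2 : HasDerivAt (fun u : ℝ => u ^ t) (t * (‖x‖ ^ 2 : ℝ) ^ (t - 1)) (‖x‖ ^ 2) :=
    Real.hasDerivAt_rpow_const (Or.inl hs.ne')
  have h3 := h2.comp_hasFDerivAt x h1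
  have h4 := (hasFDerivAt_pe Q x).mul h3
  have : hD t Q x = pe Q x • ((t * (‖x‖ ^ 2 : ℝ) ^ (t - 1)) • peD (SP n) x)
      + ((‖x‖ ^ 2 : ℝ) ^ t) • peD Q x := by
    rw [hD, smul_smul]; module
  rw [this]
  exact h4

lemma pe_X_mul (R : MvPolynomial (Fin n) ℝ) (r : Fin n) (y : En n) :
    pe (X r * R) y = y r * pe R y := by
  rw [pe, pe, eval_mul, eval_X]

lemma hD_single (t : ℝ) (Q : MvPolynomial (Fin n) ℝ) (x : En n) (r : Fin n) :
    hD t Q x (EuclideanSpace.single r 1)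
      = hF t (pderiv r Q) x + (2 * t) * hF (t - 1) (X r * Q) x := by
  rw [hD, ContinuousLinearMap.add_apply, ContinuousLinearMap.smul_apply,
    ContinuousLinearMap.smul_apply, peD_single, peD_single, pderiv_SP]
  have : pe (2 • X (R := ℝ) r) x = 2 * x r := by
    rw [pe]; simp
  rw [this]
  simp only [hF, pe_X_mul, smul_eq_mul]
  ring

lemma partialDer_eq {f : En n → ℝ} {L : En n →L[ℝ] ℝ} {x : En n}
    (hf : HasFDerivAt f L x) (r : Fin n) :
    partialDer n r f x = L (EuclideanSpace.single r 1) := by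
  rw [partialDer, hf.fderiv]

lemma partialDer_congr {f g : En n → ℝ} (hfg : ∀ y : En n, y ≠ 0 → f y = g y)
    (r : Fin n) {x : En n} (hx : x ≠ 0) :
    partialDer n r f x = partialDer n r g x := by
  have hev : f =ᶠ[nhds x] g := by
    filter_upwards [IsOpen.mem_nhds isOpen_compl_singleton
      (by simpa using hx : x ∈ ({0}ᶜ : Set (En n)))] with y hy
    exact hfg y (by simpa using hy)
  rw [partialDer, partialDer, hev.fderiv_eq]

lemma laplacianFun_congr {f g : En n → ℝ} (hfg : ∀ y : En n, y ≠ 0 → f y = g y)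
    {x : En n} (hx : x ≠ 0) :
    laplacianFun n f x = laplacianFun n g x := by
  rw [laplacianFun, laplacianFun]
  refine Finset.sum_congr rfl fun j _ => ?_
  exact partialDer_congr (fun y hy => partialDer_congr hfg j hy) j hx

lemma partialDer_hF (t : ℝ) (Q : MvPolynomial (Fin n) ℝ) (r : Fin n)
    {y : En n} (hy : y ≠ 0) :
    partialDer n r (hF t Q) y
      = hF t (pderiv r Q) y + (2 * t) * hF (t - 1) (X r * Q) y := by
  rw [partialDer_eq (hasFDerivAt_hF t Q hy) r, hD_single]

end SemmesAux

namespace SemmesAux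

open MvPolynomial

variable {n : ℕ}

lemma hF_zero (t : ℝ) (y : En n) : hF t (0 : MvPolynomial (Fin n) ℝ) y = 0 := by
  simp [hF, pe]

lemma hF_add (t : ℝ) (A B : MvPolynomial (Fin n) ℝ) (y : En n) :
    hF t (A + B) y = hF t A y + hF t B y := by
  simp [hF, pe, add_mul]

lemma hF_smul (t : ℝ) (c : ℝ) (R : MvPolynomial (Fin n) ℝ) (y : En n) :
    hF t (c • R) y = c * hF t R y := by
  simp only [hF, pe, smul_eq_C_mul, eval_mul, eval_C]
  ring

lemma sum_hF (c : ℝ) (A : Fin n → MvPolynomial (Fin n) ℝ) (y : En n) :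
    ∑ j : Fin n, hF c (A j) y = hF c (∑ j : Fin n, A j) y := by
  simp only [hF, pe]
  rw [map_sum, Finset.sum_mul]

lemma hF_SP_mul (c : ℝ) (R : MvPolynomial (Fin n) ℝ) {y : En n} (hy : y ≠ 0) :
    hF c (SP n * R) y = hF (c + 1) R y := by
  have hs : (0 : ℝ) < ‖y‖ ^ 2 := by
    have : ‖y‖ ≠ 0 := norm_ne_zero_iff.2 hy
    positivity
  have hpe : pe (SP n * R) y = (‖y‖ ^ 2) * pe R y := by
    rw [pe, eval_mul]
    have := pe_SP y
    rw [pe] at this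
    rw [this]
    rfl
  rw [hF, hF, hpe, Real.rpow_add hs, Real.rpow_one]
  ring

lemma sum_pderiv_X_mul (R : MvPolynomial (Fin n) ℝ) :
    ∑ j : Fin n, pderiv j (X j * R)
      = (n : ℝ) • R + ∑ j : Fin n, X j * pderiv j R := by
  have key : ∀ j : Fin n, pderiv j (X j * R) = R + X j * pderiv j R := fun j => by
    rw [pderiv_mul, pderiv_X_self, one_mul]
  rw [Finset.sum_congr rfl fun j _ => key j, Finset.sum_add_distrib, Finset.sum_const,
    Finset.card_univ, Fintype.card_fin]
  congr 1
  exact (Nat.cast_smul_eq_nsmul ℝ n R).symm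

lemma sum_X_mul_X_mul (R : MvPolynomial (Fin n) ℝ) :
    ∑ j : Fin n, X j * (X j * R) = SP n * R := by
  rw [SP, Finset.sum_mul]
  exact Finset.sum_congr rfl fun j _ => (mul_assoc _ _ _).symm

lemma pd_two (t1 t2 c : ℝ) (Q1 Q2 : MvPolynomial (Fin n) ℝ) (j : Fin n)
    {y : En n} (hy : y ≠ 0) :
    partialDer n j (fun z => hF t1 Q1 z + c * hF t2 Q2 z) y
      = (hF t1 (pderiv j Q1) y + (2 * t1) * hF (t1 - 1) (X j * Q1) y)
        + c * (hF t2 (pderiv j Q2) y + (2 * t2) * hF (t2 - 1) (X j * Q2) y) := by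
  have h : HasFDerivAt (fun z : En n => hF t1 Q1 z + c * hF t2 Q2 z)
      (hD t1 Q1 y + c • hD t2 Q2 y) y :=
    (hasFDerivAt_hF t1 Q1 hy).add ((hasFDerivAt_hF t2 Q2 hy).const_mul c)
  rw [partialDer_eq h j, ContinuousLinearMap.add_apply, ContinuousLinearMap.smul_apply,
    hD_single, hD_single, smul_eq_mul]

lemma pd_four (t1 t2 t3 t4 c2 c3 c4 : ℝ) (Q1 Q2 Q3 Q4 : MvPolynomial (Fin n) ℝ)
    (j : Fin n) {y : En n} (hy : y ≠ 0) :
    partialDer n j (fun z => (hF t1 Q1 z + c2 * hF t2 Q2 z)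
        + c3 * (hF t3 Q3 z + c4 * hF t4 Q4 z)) y
      = ((hF t1 (pderiv j Q1) y + (2 * t1) * hF (t1 - 1) (X j * Q1) y)
          + c2 * (hF t2 (pderiv j Q2) y + (2 * t2) * hF (t2 - 1) (X j * Q2) y))
        + c3 * ((hF t3 (pderiv j Q3) y + (2 * t3) * hF (t3 - 1) (X j * Q3) y)
          + c4 * (hF t4 (pderiv j Q4) y + (2 * t4) * hF (t4 - 1) (X j * Q4) y)) := by
  have h : HasFDerivAt (fun z : En n => (hF t1 Q1 z + c2 * hF t2 Q2 z)
      + c3 * (hF t3 Q3 z + c4 * hF t4 Q4 z))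
      ((hD t1 Q1 y + c2 • hD t2 Q2 y) + c3 • (hD t3 Q3 y + c4 • hD t4 Q4 y)) y :=
    ((hasFDerivAt_hF t1 Q1 hy).add ((hasFDerivAt_hF t2 Q2 hy).const_mul c2)).add
      (((hasFDerivAt_hF t3 Q3 hy).add ((hasFDerivAt_hF t4 Q4 hy).const_mul c4)).const_mul c3)
  rw [partialDer_eq h j]
  simp only [ContinuousLinearMap.add_apply, ContinuousLinearMap.smul_apply, smul_eq_mul,
    hD_single]

lemma laplacian_D1 (t : ℝ) {Q : MvPolynomial (Fin n) ℝ} {d : ℕ} (hd : 1 ≤ d)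
    (hQhom : Q.IsHomogeneous d)
    (hQharm : ∑ j : Fin n, pderiv j (pderiv j Q) = 0)
    (r : Fin n) {x : En n} (hx : x ≠ 0) :
    laplacianFun n (fun y => hF t (pderiv r Q) y + (2 * t) * hF (t - 1) (X r * Q) y) x
      = (2 * t * (2 * (d : ℝ) + n + 2 * t - 2)) *
          (hF (t - 1) (pderiv r Q) x + (2 * (t - 1)) * hF (t - 2) (X r * Q) x) := by
  have hQ1hom : (pderiv r Q).IsHomogeneous (d - 1) := pderiv_isHomogeneous hQhom r
  have hQ2hom : (X r * Q).IsHomogeneous (d + 1) := by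
    have := (isHomogeneous_X ℝ r).mul hQhom
    rwa [add_comm] at this
  have hQ1harm : ∑ j : Fin n, pderiv j (pderiv j (pderiv r Q)) = 0 := lap_pderiv hQharm r
  have hkey : ∀ j : Fin n,
      partialDer n j (partialDer n j
        (fun y => hF t (pderiv r Q) y + (2 * t) * hF (t - 1) (X r * Q) y)) x
      = hF t (pderiv j (pderiv j (pderiv r Q))) x
        + (2 * t) * hF (t - 1) (X j * pderiv j (pderiv r Q)) x
        + (2 * t) * hF (t - 1) (pderiv j (X j * pderiv r Q)) x
        + (4 * t * (t - 1)) * hF (t - 2) (X j * (X j * pderiv r Q)) x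
        + (2 * t) * hF (t - 1) (pderiv j (pderiv j (X r * Q))) x
        + (4 * t * (t - 1)) * hF (t - 2) (X j * pderiv j (X r * Q)) x
        + (4 * t * (t - 1)) * hF (t - 2) (pderiv j (X j * (X r * Q))) x
        + (8 * t * (t - 1) * (t - 2)) * hF (t - 3) (X j * (X j * (X r * Q))) x := by
    intro j
    have step1 : ∀ y : En n, y ≠ 0 →
        partialDer n j (fun y => hF t (pderiv r Q) y + (2 * t) * hF (t - 1) (X r * Q) y) y
        = (hF t (pderiv j (pderiv r Q)) y + (2 * t) * hF (t - 1) (X j * pderiv r Q) y)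
          + (2 * t) * (hF (t - 1) (pderiv j (X r * Q)) y
            + (2 * (t - 1)) * hF (t - 1 - 1) (X j * (X r * Q)) y) :=
      fun y hy => pd_two t (t - 1) (2 * t) (pderiv r Q) (X r * Q) j hy
    rw [partialDer_congr step1 j hx,
      pd_four t (t - 1) (t - 1) (t - 1 - 1) (2 * t) (2 * t) (2 * (t - 1))
        (pderiv j (pderiv r Q)) (X j * pderiv r Q) (pderiv j (X r * Q))
        (X j * (X r * Q)) j hx]
    rw [show t - 1 - 1 = t - 2 by ring, show t - 2 - 1 = t - 3 by ring]
    ring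
  rw [laplacianFun, Finset.sum_congr rfl fun j _ => hkey j]
  simp only [Finset.sum_add_distrib, ← Finset.mul_sum, sum_hF]
  rw [hQ1harm, euler hQ1hom, sum_pderiv_X_mul (pderiv r Q), euler hQ1hom,
    sum_X_mul_X_mul (pderiv r Q), sum_pderiv_pderiv_X_mul hQharm r, euler hQ2hom,
    sum_pderiv_X_mul (X r * Q), euler hQ2hom, sum_X_mul_X_mul (X r * Q)]
  rw [hF_zero, hF_smul, hF_add, hF_smul, hF_smul, hF_SP_mul _ _ hx, hF_smul, hF_smul,
    hF_add, hF_smul, hF_smul, hF_SP_mul _ _ hx]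
  rw [show t - 2 + 1 = t - 1 by ring, show t - 3 + 1 = t - 2 by ring]
  have hc1 : ((d - 1 : ℕ) : ℝ) = (d : ℝ) - 1 := by
    have : ((d - 1 : ℕ) : ℝ) = ((d : ℕ) : ℝ) - ((1 : ℕ) : ℝ) := by
      rw [Nat.cast_sub hd]
    simpa using this
  have hc2 : ((d + 1 : ℕ) : ℝ) = (d : ℝ) + 1 := by push_cast; ring
  rw [hc1, hc2]
  ring

end SemmesAux

namespace SemmesAux

open MvPolynomial

variable {n : ℕ}

lemma div_norm_pow_eq_hF (Q : MvPolynomial (Fin n) ℝ) (k : ℕ) {y : En n} (hy : y ≠ 0) :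
    MvPolynomial.eval (fun i => y i) Q / ‖y‖ ^ k = hF (-(k : ℝ) / 2) Q y := by
  have hpos : (0 : ℝ) < ‖y‖ := norm_pos_iff.2 hy
  have hpow : ((‖y‖ ^ 2 : ℝ)) ^ (-(k : ℝ) / 2) = (‖y‖ ^ k)⁻¹ := by
    rw [← Real.rpow_natCast ‖y‖ 2, ← Real.rpow_mul hpos.le,
      show ((2 : ℕ) : ℝ) * (-(k : ℝ) / 2) = -(k : ℝ) by push_cast; ring,
      Real.rpow_neg hpos.le, Real.rpow_natCast]
  rw [hF, hpow, div_eq_mul_inv]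
  rfl

end SemmesAux


open SemmesAux MvPolynomial

/-- with P odd, harmonic, homogeneous of degree l ≥ 3 on ℝⁿ, n ≥ 3,
and P_{rs} := (l(l−1))⁻¹ ∂_r∂_s P, for every r, s and every x ≠ 0 one has
−((n+l−3)(n+l−5))⁻¹ Δ[∂_r(P_{rs}(x)|x|^{−(n+l−5)})]
  = (l−1)(n+l−3)⁻¹ ∂_r(P_{rs}(x)|x|^{−(n+l−3)}). -/
theorem laplacian_identity_for_semmes_kernels
    (n : ℕ) (hn : 3 ≤ n) (l : ℕ) (hl : 3 ≤ l)
    (P : MvPolynomial (Fin n) ℝ) (hodd : IsOddPoly n P)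
    (hharm : IsHarmonicPoly n P) (hhom : P.IsHomogeneous l)
    (Prs : Fin n → Fin n → MvPolynomial (Fin n) ℝ)
    (hPrs : ∀ r s, Prs r s =
      ((l : ℝ) * ((l : ℝ) - 1))⁻¹ • MvPolynomial.pderiv r (MvPolynomial.pderiv s P)) :
    ∀ (r s : Fin n), ∀ x : En n, x ≠ 0 →
      -(((n : ℝ) + l - 3) * ((n : ℝ) + l - 5))⁻¹ *
          laplacianFun n (partialDer n r
            (fun y => MvPolynomial.eval (fun i => y i) (Prs r s) / ‖y‖ ^ (n + l - 5))) x =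
        (((l : ℝ) - 1) / ((n : ℝ) + l - 3)) *
          partialDer n r
            (fun y => MvPolynomial.eval (fun i => y i) (Prs r s) / ‖y‖ ^ (n + l - 3)) x := by
  intro r s x hx
  -- cast facts
  have hc5 : ((n + l - 5 : ℕ) : ℝ) = (n : ℝ) + l - 5 := by
    rw [Nat.cast_sub (by omega : 5 ≤ n + l)]; push_cast; ring
  have hc3 : ((n + l - 3 : ℕ) : ℝ) = (n : ℝ) + l - 3 := by
    rw [Nat.cast_sub (by omega : 3 ≤ n + l)]; push_cast; ring
  have hcl2 : ((l - 2 : ℕ) : ℝ) = (l : ℝ) - 2 := by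
    rw [Nat.cast_sub (by omega : 2 ≤ l)]; push_cast; ring
  -- homogeneity and harmonicity of Q = Prs r s
  have h1 : (pderiv r (pderiv s P)).IsHomogeneous (l - 2) := by
    have := pderiv_isHomogeneous (pderiv_isHomogeneous hhom s) r
    have e : l - 1 - 1 = l - 2 := by omega
    rwa [e] at this
  have hQhom : (Prs r s).IsHomogeneous (l - 2) := by
    rw [hPrs, smul_eq_C_mul]
    have := (isHomogeneous_C (Fin n) (((l : ℝ) * ((l : ℝ) - 1))⁻¹)).mul h1
    simpa using this
  have hQharm : ∑ j : Fin n, pderiv j (pderiv j (Prs r s)) = 0 := by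
    rw [hPrs]
    have h2 : ∑ j : Fin n, pderiv j (pderiv j (pderiv r (pderiv s P))) = 0 :=
      lap_pderiv (lap_pderiv hharm s) r
    simp only [Derivation.map_smul, ← Finset.smul_sum, h2, smul_zero]
  -- abbreviation for the exponent
  have key3 : -((n + l - 3 : ℕ) : ℝ) / 2 = -((n + l - 5 : ℕ) : ℝ) / 2 - 1 := by
    rw [hc3, hc5]; ring
  -- LHS: rewrite the inner partial derivative
  have hL1 : ∀ y : En n, y ≠ 0 →
      partialDer n r
        (fun y => MvPolynomial.eval (fun i => y i) (Prs r s) / ‖y‖ ^ (n + l - 5)) y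
      = hF (-((n + l - 5 : ℕ) : ℝ) / 2) (pderiv r (Prs r s)) y
        + (2 * (-((n + l - 5 : ℕ) : ℝ) / 2)) *
            hF (-((n + l - 5 : ℕ) : ℝ) / 2 - 1) (X r * Prs r s) y := by
    intro y hy
    rw [partialDer_congr (fun z hz => div_norm_pow_eq_hF (Prs r s) (n + l - 5) hz) r hy,
      partialDer_hF _ _ r hy]
  have hLap : laplacianFun n (partialDer n r
      (fun y => MvPolynomial.eval (fun i => y i) (Prs r s) / ‖y‖ ^ (n + l - 5))) x
      = (2 * (-((n + l - 5 : ℕ) : ℝ) / 2) *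
          (2 * ((l - 2 : ℕ) : ℝ) + n + 2 * (-((n + l - 5 : ℕ) : ℝ) / 2) - 2)) *
        (hF (-((n + l - 5 : ℕ) : ℝ) / 2 - 1) (pderiv r (Prs r s)) x
          + (2 * (-((n + l - 5 : ℕ) : ℝ) / 2 - 1)) *
              hF (-((n + l - 5 : ℕ) : ℝ) / 2 - 2) (X r * Prs r s) x) := by
    rw [laplacianFun_congr hL1 hx]
    exact laplacian_D1 (-((n + l - 5 : ℕ) : ℝ) / 2) (by omega : 1 ≤ l - 2) hQhom hQharm r hx
  -- RHS: rewrite the partial derivative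
  have hR : partialDer n r
      (fun y => MvPolynomial.eval (fun i => y i) (Prs r s) / ‖y‖ ^ (n + l - 3)) x
      = hF (-((n + l - 5 : ℕ) : ℝ) / 2 - 1) (pderiv r (Prs r s)) x
        + (2 * (-((n + l - 5 : ℕ) : ℝ) / 2 - 1)) *
            hF (-((n + l - 5 : ℕ) : ℝ) / 2 - 1 - 1) (X r * Prs r s) x := by
    rw [partialDer_congr (fun z hz => by
        rw [div_norm_pow_eq_hF (Prs r s) (n + l - 3) hz, key3]) r hx,
      partialDer_hF _ _ r hx]
  rw [hLap, hR, show -((n + l - 5 : ℕ) : ℝ) / 2 - 1 - 1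
      = -((n + l - 5 : ℕ) : ℝ) / 2 - 2 by ring]
  have h3 : (n : ℝ) + l - 3 ≠ 0 := by
    have hn' : (3 : ℝ) ≤ (n : ℝ) := by exact_mod_cast hn
    have hl' : (3 : ℝ) ≤ (l : ℝ) := by exact_mod_cast hl
    nlinarith
  have h5 : (n : ℝ) + l - 5 ≠ 0 := by
    have hn' : (3 : ℝ) ≤ (n : ℝ) := by exact_mod_cast hn
    have hl' : (3 : ℝ) ≤ (l : ℝ) := by exact_mod_cast hl
    nlinarith
  rw [hc5, hcl2]
  field_simp
  ring
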